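/- For all n ≥ 3, g(n) < n + √(2n) + 1. -/

import Mathlib

namespace ShiAux

open SimpleGraph

variable {n : ℕ} {G : SimpleGraph (Fin n)}

/-- The `t`-th edge of the Hamiltonian cycle determined by the labeling `f`. -/
def CE (f : ℕ → Fin n) (t : ℕ) : Sym2 (Fin n) := s(f t, f (t+1))

/-- Walk along the Hamiltonian cycle from `f i` to `f (i+k)`. -/
def segLen (f : ℕ → Fin n) (hadj : ∀ t, G.Adj (f t) (f (t+1))) (i : ℕ) :
    (k : ℕ) → G.Walk (f i) (f (i+k))
  | 0 => Walk.nil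
  | (k+1) => (segLen f hadj i k).concat (hadj (i+k))

section basic

variable (f : ℕ → Fin n) (hadj : ∀ t, G.Adj (f t) (f (t+1)))

@[simp] lemma length_segLen (i k : ℕ) : (segLen f hadj i k).length = k := by
  induction k with
  | zero => rfl
  | succ k ih => simp [segLen, Walk.length_concat, ih]

lemma support_segLen (i k : ℕ) :
    (segLen f hadj i k).support = (List.range (k+1)).map (fun t => f (i+t)) := by
  induction k with
  | zero => simp [segLen, List.range_succ]
  | succ k ih => simp [segLen, ih, List.range_succ]

lemma edges_segLen (i k : ℕ) :
    (segLen f hadj i k).edges = (List.range k).map (fun t => CE f (i+t)) := by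
  induction k with
  | zero => simp [segLen]
  | succ k ih =>
      simp only [segLen, Walk.edges_concat, ih, List.range_succ, List.map_append, List.map_cons,
        List.map_nil, List.concat_eq_append, CE]
      rw [Nat.add_assoc]

end basic

section periodic

variable (f : ℕ → Fin n)
variable (hper : ∀ t, f (t + n) = f t)
variable (hinj : ∀ i j, i < n → j < n → f i = f j → i = j)
variable (hn3 : 3 ≤ n)

include hper in
lemma f_mod (t : ℕ) : f t = f (t % n) := by
  by_cases hn : n = 0
  · simp [hn]
  conv_lhs => rw [← Nat.mod_add_div t n]
  generalize t / n = q
  induction q with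
  | zero => simp
  | succ q ih => rw [Nat.mul_succ, ← Nat.add_assoc, ← ih]; rw [hper]

include hper hinj in
lemma f_inj_mod {a b : ℕ} (h : f a = f b) : a % n = b % n := by
  by_cases hn : n = 0
  · subst hn; exact (f a).elim0
  have ha := Nat.mod_lt a (Nat.pos_of_ne_zero hn)
  have hb := Nat.mod_lt b (Nat.pos_of_ne_zero hn)
  exact hinj _ _ ha hb (by rw [← f_mod f hper, ← f_mod f hper, h])

include hper hinj in
/-- distinctness of `f` for sorted indices in `[0, n]` -/
lemma f_ne {a b : ℕ} (hab : a < b) (hbn : b ≤ n) (hne : ¬(a = 0 ∧ b = n)) :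
    f a ≠ f b := by
  intro h
  have := f_inj_mod f hper hinj h
  rcases Nat.lt_or_ge b n with hb | hb
  · rw [Nat.mod_eq_of_lt (lt_trans hab hb), Nat.mod_eq_of_lt hb] at this; omega
  · have hbn' : b = n := le_antisymm hbn hb
    subst hbn'
    rw [Nat.mod_eq_of_lt hab, Nat.mod_self] at this
    exact hne ⟨this, rfl⟩

include hper in
omit hper in
lemma CE_mem_edgeSet (hadj : ∀ t, G.Adj (f t) (f (t+1))) (t : ℕ) : CE f t ∈ G.edgeSet :=
  (hadj t)

include hper hinj hn3 in
lemma CE_inj {a b : ℕ} (h : CE f a = CE f b) : a % n = b % n := by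
  rw [CE, CE, Sym2.eq_iff] at h
  rcases h with ⟨h1, _⟩ | ⟨h1, h2⟩
  · exact f_inj_mod f hper hinj h1
  · have e1 : a ≡ b + 1 [MOD n] := f_inj_mod f hper hinj h1
    have e2 : a + 1 ≡ b [MOD n] := f_inj_mod f hper hinj h2
    have e3 : b ≡ b + 2 [MOD n] := by
      calc b ≡ a + 1 [MOD n] := e2.symm
        _ ≡ (b + 1) + 1 [MOD n] := e1.add_right 1
        _ = b + 2 := by ring
    have : n ∣ 2 := by simpa using (Nat.modEq_iff_dvd' (by omega)).mp e3
    have := Nat.le_of_dvd (by norm_num) this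
    omega

end periodic

section good

/-- There is a cycle of length at most `n` whose edges lie in `HS ∪ {e1, e2}`
and which uses both `e1` and `e2`. -/
def Good (G : SimpleGraph (Fin n)) (HS : Set (Sym2 (Fin n))) (e1 e2 : Sym2 (Fin n)) : Prop :=
  ∃ (u : Fin n) (w : G.Walk u u), w.IsCycle ∧ w.length ≤ n ∧
    (∀ e ∈ w.edges, e ∈ HS ∨ e = e1 ∨ e = e2) ∧ e1 ∈ w.edges ∧ e2 ∈ w.edges

lemma Good.symm {HS : Set (Sym2 (Fin n))} {e1 e2 : Sym2 (Fin n)} (h : Good G HS e1 e2) :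
    Good G HS e2 e1 := by
  obtain ⟨u, w, h1, h2, h3, h4, h5⟩ := h
  exact ⟨u, w, h1, h2, fun e he => by rcases h3 e he with h|h|h <;> tauto, h5, h4⟩

variable (f : ℕ → Fin n) (hper : ∀ t, f (t + n) = f t)
  (hadj : ∀ t, G.Adj (f t) (f (t+1)))
  (hinj : ∀ i j, i < n → j < n → f i = f j → i = j)

lemma nodup_map_f {L : List ℕ} (h : L.Pairwise fun a b => f a ≠ f b) : (L.map f).Nodup := by
  simpa [List.Nodup, List.pairwise_map] using h

include hper hadj hinj in
lemma good_shared0 {x y : ℕ} (hx : 1 ≤ x) (hxy : x < y) (hy : y ≤ n - 1)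
    (gx : G.Adj (f 0) (f x)) (gy : G.Adj (f 0) (f y))
    (hex : s(f 0, f x) ∉ Set.range (CE f))
    (hne : s(f 0, f x) ≠ s(f 0, f y)) :
    Good G (Set.range (CE f)) s(f 0, f x) s(f 0, f y) := by
  have hn1 : 1 ≤ n := by omega
  set P : G.Walk (f x) (f 0) :=
    ((segLen f hadj x (y-x)).copy rfl (congrArg f (by omega))).concat gy.symm with hP
  have hsupP : P.support = ((List.range (y-x+1)).map (fun t => x + t) ++ [0]).map f := by
    simp [hP, support_segLen, List.map_map, Function.comp_def]
  have hedgP : P.edges = ((List.range (y-x)).map (fun t => CE f (x+t))) ++ [s(f y, f 0)] := by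
    simp [hP, edges_segLen]
  have hpath : P.IsPath := by
    apply SimpleGraph.Walk.IsPath.mk'
    rw [hsupP]
    apply nodup_map_f
    rw [List.pairwise_append]
    refine ⟨?_, by simp, ?_⟩
    · rw [List.pairwise_map]
      apply List.Pairwise.imp_of_mem ?_ List.pairwise_lt_range
      intro a b ha hb hab
      rw [List.mem_range] at ha hb
      exact f_ne f hper hinj (by omega) (by omega) (by omega)
    · intro a ha b hb
      simp only [List.mem_map, List.mem_range] at ha
      simp only [List.mem_singleton] at hb
      obtain ⟨t, ht, rfl⟩ := ha
      subst hb
      exact (f_ne f hper hinj (by omega) (by omega) (by omega)).symm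
  have hchord : s(f 0, f x) ∉ P.edges := by
    rw [hedgP]
    simp only [List.mem_append, List.mem_map, List.mem_range, List.mem_singleton]
    rintro (⟨t, ht, hCE⟩ | hey)
    · exact hex ⟨x + t, hCE⟩
    · exact hne (hey.trans (Sym2.eq_swap))
  refine ⟨f 0, Walk.cons gx P, ?_, ?_, ?_, ?_, ?_⟩
  · exact (Walk.cons_isCycle_iff P gx).mpr ⟨hpath, hchord⟩
  · simp [hP, Walk.length_concat]
    omega
  · intro e he
    simp only [Walk.edges_cons, List.mem_cons, hedgP, List.mem_append, List.mem_map,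
      List.mem_range, List.mem_singleton] at he
    rcases he with rfl | ⟨t, ht, rfl⟩ | rfl | h
    · tauto
    · exact Or.inl ⟨x + t, rfl⟩
    · right; right; rw [Sym2.eq_swap]
    · simp at h
  · simp
  · simp only [Walk.edges_cons, List.mem_cons, hedgP, List.mem_append, List.mem_singleton]
    right; right
    rw [Sym2.eq_swap]
    simp


include hper hadj hinj in
lemma good_sharedTop {b c : ℕ} (hc : 1 ≤ c) (hcb : c < b) (hb : b ≤ n - 1)
    (g0b : G.Adj (f 0) (f b)) (gcb : G.Adj (f c) (f b))
    (he2 : s(f c, f b) ∉ Set.range (CE f))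
    (hne : s(f 0, f b) ≠ s(f c, f b)) :
    Good G (Set.range (CE f)) s(f 0, f b) s(f c, f b) := by
  set P : G.Walk (f b) (f c) :=
    Walk.cons g0b.symm ((segLen f hadj 0 c).copy (congrArg f (Nat.zero_add 0).symm ▸ rfl)
      (congrArg f (Nat.zero_add c))) with hP
  have hsupP : P.support = (b :: (List.range (c+1)).map (fun t => 0 + t)).map f := by
    simp [hP, support_segLen, List.map_map, Function.comp_def]
  have hedgP : P.edges = s(f b, f 0) :: (List.range c).map (fun t => CE f (0+t)) := by
    simp [hP, edges_segLen]
  have hpath : P.IsPath := by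
    apply SimpleGraph.Walk.IsPath.mk'
    rw [hsupP]
    apply nodup_map_f
    rw [List.pairwise_cons]
    constructor
    · intro a ha
      simp only [List.mem_map, List.mem_range] at ha
      obtain ⟨t, ht, rfl⟩ := ha
      exact (f_ne f hper hinj (by omega) (by omega) (by omega)).symm
    · rw [List.pairwise_map]
      apply List.Pairwise.imp_of_mem ?_ List.pairwise_lt_range
      intro a b ha hb hab
      rw [List.mem_range] at ha hb
      exact f_ne f hper hinj (by omega) (by omega) (by omega)
  have hchord : s(f c, f b) ∉ P.edges := by
    rw [hedgP]
    simp only [List.mem_cons, List.mem_map, List.mem_range]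
    rintro (hey | ⟨t, ht, hCE⟩)
    · exact hne (Sym2.eq_swap.trans hey.symm)
    · exact he2 ⟨0 + t, hCE⟩
  refine ⟨f c, Walk.cons gcb P, ?_, ?_, ?_, ?_, ?_⟩
  · exact (Walk.cons_isCycle_iff P gcb).mpr ⟨hpath, hchord⟩
  · simp [hP, Walk.length_concat]; omega
  · intro e he
    simp only [Walk.edges_cons, List.mem_cons, hedgP, List.mem_map, List.mem_range] at he
    rcases he with rfl | rfl | ⟨t, ht, rfl⟩
    · right; right; rw [Sym2.eq_swap]
    · right; left; rw [Sym2.eq_swap]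
    · exact Or.inl ⟨0 + t, rfl⟩
  · simp only [Walk.edges_cons, List.mem_cons, hedgP]
    right; left; rw [Sym2.eq_swap]
  · simp

include hper hadj hinj in
lemma good_sharedMid {b d : ℕ} (hb : 1 ≤ b) (hbd : b < d) (hd2 : 2 ≤ d) (hd : d ≤ n - 1)
    (g0b : G.Adj (f 0) (f b)) (gbd : G.Adj (f b) (f d))
    (he1 : s(f 0, f b) ∉ Set.range (CE f))
    (hne : s(f 0, f b) ≠ s(f b, f d)) :
    Good G (Set.range (CE f)) s(f 0, f b) s(f b, f d) := by
  set P : G.Walk (f b) (f 0) :=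
    Walk.cons gbd ((segLen f hadj d (n-d)).copy rfl
      (by rw [show d + (n-d) = 0 + n by omega, hper] : f (d + (n-d)) = f 0)) with hP
  have hsupP : P.support = (b :: (List.range (n-d+1)).map (fun t => d + t)).map f := by
    simp [hP, support_segLen, List.map_map, Function.comp_def]
  have hedgP : P.edges = s(f b, f d) :: (List.range (n-d)).map (fun t => CE f (d+t)) := by
    simp [hP, edges_segLen]
  have hpath : P.IsPath := by
    apply SimpleGraph.Walk.IsPath.mk'
    rw [hsupP]
    apply nodup_map_f
    rw [List.pairwise_cons]
    constructor
    · intro a ha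
      simp only [List.mem_map, List.mem_range] at ha
      obtain ⟨t, ht, rfl⟩ := ha
      exact f_ne f hper hinj (by omega) (by omega) (by omega)
    · rw [List.pairwise_map]
      apply List.Pairwise.imp_of_mem ?_ List.pairwise_lt_range
      intro a b ha hb hab
      rw [List.mem_range] at ha hb
      exact f_ne f hper hinj (by omega) (by omega) (by omega)
  have hchord : s(f 0, f b) ∉ P.edges := by
    rw [hedgP]
    simp only [List.mem_cons, List.mem_map, List.mem_range]
    rintro (hey | ⟨t, ht, hCE⟩)
    · exact hne hey
    · exact he1 ⟨d + t, hCE⟩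
  refine ⟨f 0, Walk.cons g0b P, ?_, ?_, ?_, ?_, ?_⟩
  · exact (Walk.cons_isCycle_iff P g0b).mpr ⟨hpath, hchord⟩
  · simp [hP, Walk.length_concat]; omega
  · intro e he
    simp only [Walk.edges_cons, List.mem_cons, hedgP, List.mem_map, List.mem_range] at he
    rcases he with rfl | rfl | ⟨t, ht, rfl⟩
    · tauto
    · tauto
    · exact Or.inl ⟨d + t, rfl⟩
  · simp
  · simp only [Walk.edges_cons, List.mem_cons, hedgP]
    tauto


include hper hadj hinj in
lemma good_nested {b c d : ℕ} (hc : 1 ≤ c) (hcd : c < d) (hdb : d < b) (hb : b ≤ n - 1)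
    (g0b : G.Adj (f 0) (f b)) (gcd : G.Adj (f c) (f d))
    (he1 : s(f 0, f b) ∉ Set.range (CE f))
    (hne : s(f 0, f b) ≠ s(f c, f d)) :
    Good G (Set.range (CE f)) s(f 0, f b) s(f c, f d) := by
  set Q : G.Walk (f 0) (f b) :=
    ((segLen f hadj 0 c).copy rfl (congrArg f (Nat.zero_add c))).append
      (Walk.cons gcd ((segLen f hadj d (b-d)).copy rfl (congrArg f (by omega)))) with hQ
  have hsupQ : Q.support =
      ((List.range (c+1)).map (fun t => 0 + t) ++ (List.range (b-d+1)).map (fun t => d + t)).map f := by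
    simp [hQ, Walk.support_append, support_segLen, List.map_map, Function.comp_def]
  have hedgQ : Q.edges = (List.range c).map (fun t => CE f (0+t)) ++
      s(f c, f d) :: (List.range (b-d)).map (fun t => CE f (d+t)) := by
    simp [hQ, Walk.edges_append, edges_segLen]
  have hpath : Q.IsPath := by
    apply SimpleGraph.Walk.IsPath.mk'
    rw [hsupQ]
    apply nodup_map_f
    rw [List.pairwise_append]
    refine ⟨?_, ?_, ?_⟩
    · rw [List.pairwise_map]
      apply List.Pairwise.imp_of_mem ?_ List.pairwise_lt_range
      intro a b ha hb hab
      rw [List.mem_range] at ha hb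
      exact f_ne f hper hinj (by omega) (by omega) (by omega)
    · rw [List.pairwise_map]
      apply List.Pairwise.imp_of_mem ?_ List.pairwise_lt_range
      intro a b ha hb hab
      rw [List.mem_range] at ha hb
      exact f_ne f hper hinj (by omega) (by omega) (by omega)
    · intro a ha b' hb'
      simp only [List.mem_map, List.mem_range] at ha hb'
      obtain ⟨t, ht, rfl⟩ := ha
      obtain ⟨t', ht', rfl⟩ := hb'
      exact f_ne f hper hinj (by omega) (by omega) (by omega)
  have hchord : s(f 0, f b) ∉ Q.edges := by
    rw [hedgQ]
    simp only [List.mem_append, List.mem_cons, List.mem_map, List.mem_range]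
    rintro (⟨t, ht, hCE⟩ | hey | ⟨t, ht, hCE⟩)
    · exact he1 ⟨0 + t, hCE⟩
    · exact hne hey
    · exact he1 ⟨d + t, hCE⟩
  refine ⟨f 0, Walk.cons g0b Q.reverse, ?_, ?_, ?_, ?_, ?_⟩
  · refine (Walk.cons_isCycle_iff Q.reverse g0b).mpr ⟨hpath.reverse, ?_⟩
    rw [Walk.edges_reverse, List.mem_reverse]
    exact hchord
  · simp only [Walk.length_cons, Walk.length_reverse]
    have : Q.length = c + (1 + (b-d)) := by
      simp [hQ, Walk.length_append]; omega
    omega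
  · intro e he
    simp only [Walk.edges_cons, Walk.edges_reverse, List.mem_cons, List.mem_reverse, hedgQ,
      List.mem_append, List.mem_map, List.mem_range] at he
    rcases he with rfl | ⟨t, ht, rfl⟩ | rfl | ⟨t, ht, rfl⟩
    · tauto
    · exact Or.inl ⟨0 + t, rfl⟩
    · tauto
    · exact Or.inl ⟨d + t, rfl⟩
  · simp
  · simp only [Walk.edges_cons, Walk.edges_reverse, List.mem_cons, List.mem_reverse, hedgQ,
      List.mem_append, List.mem_cons]
    tauto

include hper hadj hinj in
lemma good_crossing {b c d : ℕ} (hc : 1 ≤ c) (hcb : c < b) (hbd : b < d) (hd : d ≤ n - 1)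
    (g0b : G.Adj (f 0) (f b)) (gcd : G.Adj (f c) (f d))
    (he1 : s(f 0, f b) ∉ Set.range (CE f))
    (hne : s(f 0, f b) ≠ s(f c, f d)) :
    Good G (Set.range (CE f)) s(f 0, f b) s(f c, f d) := by
  set P : G.Walk (f b) (f 0) :=
    (((segLen f hadj c (b-c)).copy rfl (congrArg f (by omega))).reverse).append
      (Walk.cons gcd ((segLen f hadj d (n-d)).copy rfl
        (by rw [show d + (n-d) = 0 + n by omega, hper] : f (d + (n-d)) = f 0))) with hP
  have hsupP : P.support =
      (((List.range (b-c+1)).map (fun t => c + t)).reverse ++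
        (List.range (n-d+1)).map (fun t => d + t)).map f := by
    simp [hP, Walk.support_append, support_segLen, List.map_map, Function.comp_def,
      List.map_reverse]
  have hedgP : P.edges = ((List.range (b-c)).map (fun t => CE f (c+t))).reverse ++
      s(f c, f d) :: (List.range (n-d)).map (fun t => CE f (d+t)) := by
    simp [hP, Walk.edges_append, edges_segLen, List.map_reverse]
  have hpath : P.IsPath := by
    apply SimpleGraph.Walk.IsPath.mk'
    rw [hsupP]
    apply nodup_map_f
    rw [List.pairwise_append]
    refine ⟨?_, ?_, ?_⟩
    · rw [List.pairwise_reverse, List.pairwise_map]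
      apply List.Pairwise.imp_of_mem ?_ List.pairwise_lt_range
      intro a b ha hb hab
      rw [List.mem_range] at ha hb
      exact (f_ne f hper hinj (by omega) (by omega) (by omega)).symm
    · rw [List.pairwise_map]
      apply List.Pairwise.imp_of_mem ?_ List.pairwise_lt_range
      intro a b ha hb hab
      rw [List.mem_range] at ha hb
      exact f_ne f hper hinj (by omega) (by omega) (by omega)
    · intro a ha b' hb'
      simp only [List.mem_reverse, List.mem_map, List.mem_range] at ha hb'
      obtain ⟨t, ht, rfl⟩ := ha
      obtain ⟨t', ht', rfl⟩ := hb'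
      exact f_ne f hper hinj (by omega) (by omega) (by omega)
  have hchord : s(f 0, f b) ∉ P.edges := by
    rw [hedgP]
    simp only [List.mem_append, List.mem_reverse, List.mem_cons, List.mem_map, List.mem_range]
    rintro (⟨t, ht, hCE⟩ | hey | ⟨t, ht, hCE⟩)
    · exact he1 ⟨c + t, hCE⟩
    · exact hne hey
    · exact he1 ⟨d + t, hCE⟩
  refine ⟨f 0, Walk.cons g0b P, ?_, ?_, ?_, ?_, ?_⟩
  · exact (Walk.cons_isCycle_iff P g0b).mpr ⟨hpath, hchord⟩
  · simp only [Walk.length_cons]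
    have : P.length = (b-c) + (1 + (n-d)) := by
      simp [hP, Walk.length_append]; omega
    omega
  · intro e he
    simp only [Walk.edges_cons, List.mem_cons, hedgP, List.mem_append, List.mem_reverse,
      List.mem_map, List.mem_range] at he
    rcases he with rfl | ⟨t, ht, rfl⟩ | rfl | ⟨t, ht, rfl⟩
    · tauto
    · exact Or.inl ⟨c + t, rfl⟩
    · tauto
    · exact Or.inl ⟨d + t, rfl⟩
  · simp
  · simp only [Walk.edges_cons, List.mem_cons, hedgP, List.mem_append, List.mem_cons]
    tauto

include hper hadj hinj in
lemma good_parallel {b c d : ℕ} (hb : 2 ≤ b) (hbc : b < c) (hcd : c < d) (hd : d ≤ n - 1)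
    (g0b : G.Adj (f 0) (f b)) (gcd : G.Adj (f c) (f d))
    (he1 : s(f 0, f b) ∉ Set.range (CE f))
    (hne : s(f 0, f b) ≠ s(f c, f d)) :
    Good G (Set.range (CE f)) s(f 0, f b) s(f c, f d) := by
  set P : G.Walk (f b) (f 0) :=
    ((segLen f hadj b (c-b)).copy rfl (congrArg f (by omega))).append
      (Walk.cons gcd ((segLen f hadj d (n-d)).copy rfl
        (by rw [show d + (n-d) = 0 + n by omega, hper] : f (d + (n-d)) = f 0))) with hP
  have hsupP : P.support =
      ((List.range (c-b+1)).map (fun t => b + t) ++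
        (List.range (n-d+1)).map (fun t => d + t)).map f := by
    simp [hP, Walk.support_append, support_segLen, List.map_map, Function.comp_def]
  have hedgP : P.edges = (List.range (c-b)).map (fun t => CE f (b+t)) ++
      s(f c, f d) :: (List.range (n-d)).map (fun t => CE f (d+t)) := by
    simp [hP, Walk.edges_append, edges_segLen]
  have hpath : P.IsPath := by
    apply SimpleGraph.Walk.IsPath.mk'
    rw [hsupP]
    apply nodup_map_f
    rw [List.pairwise_append]
    refine ⟨?_, ?_, ?_⟩
    · rw [List.pairwise_map]
      apply List.Pairwise.imp_of_mem ?_ List.pairwise_lt_range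
      intro a b ha hb hab
      rw [List.mem_range] at ha hb
      exact f_ne f hper hinj (by omega) (by omega) (by omega)
    · rw [List.pairwise_map]
      apply List.Pairwise.imp_of_mem ?_ List.pairwise_lt_range
      intro a b ha hb hab
      rw [List.mem_range] at ha hb
      exact f_ne f hper hinj (by omega) (by omega) (by omega)
    · intro a ha b' hb'
      simp only [List.mem_map, List.mem_range] at ha hb'
      obtain ⟨t, ht, rfl⟩ := ha
      obtain ⟨t', ht', rfl⟩ := hb'
      exact f_ne f hper hinj (by omega) (by omega) (by omega)
  have hchord : s(f 0, f b) ∉ P.edges := by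
    rw [hedgP]
    simp only [List.mem_append, List.mem_cons, List.mem_map, List.mem_range]
    rintro (⟨t, ht, hCE⟩ | hey | ⟨t, ht, hCE⟩)
    · exact he1 ⟨b + t, hCE⟩
    · exact hne hey
    · exact he1 ⟨d + t, hCE⟩
  refine ⟨f 0, Walk.cons g0b P, ?_, ?_, ?_, ?_, ?_⟩
  · exact (Walk.cons_isCycle_iff P g0b).mpr ⟨hpath, hchord⟩
  · simp only [Walk.length_cons]
    have : P.length = (c-b) + (1 + (n-d)) := by
      simp [hP, Walk.length_append]; omega
    omega
  · intro e he
    simp only [Walk.edges_cons, List.mem_cons, hedgP, List.mem_append,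
      List.mem_map, List.mem_range] at he
    rcases he with rfl | ⟨t, ht, rfl⟩ | rfl | ⟨t, ht, rfl⟩
    · tauto
    · exact Or.inl ⟨b + t, rfl⟩
    · tauto
    · exact Or.inl ⟨d + t, rfl⟩
  · simp
  · simp only [Walk.edges_cons, List.mem_cons, hedgP, List.mem_append, List.mem_cons]
    tauto


include hper in
lemma CE_per (t : ℕ) : CE f (t + n) = CE f t := by
  unfold CE
  rw [hper t, show t + n + 1 = (t+1) + n by ring, hper (t+1)]

include hper in
lemma CE_mod (hn1 : 1 < n) (t : ℕ) : CE f t = CE f (t % n) := by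
  unfold CE
  rw [f_mod f hper t, f_mod f hper (t+1)]
  refine congrArg (fun x => s(f (t % n), x)) ?_
  rw [f_mod f hper (t % n + 1)]
  congr 1
  rw [Nat.add_mod t 1 n, Nat.mod_eq_of_lt hn1]

include hper hadj hinj in
lemma good_of_chords (hn3 : 3 ≤ n) {e1 e2 : Sym2 (Fin n)}
    (h1 : e1 ∈ G.edgeSet) (h2 : e2 ∈ G.edgeSet)
    (hc1 : e1 ∉ Set.range (CE f)) (hc2 : e2 ∉ Set.range (CE f)) (hne : e1 ≠ e2) :
    Good G (Set.range (CE f)) e1 e2 := by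
  classical
  have hn0 : 0 < n := by omega
  -- surjectivity of f on [0, n)
  have hsurj : ∀ v : Fin n, ∃ i, i < n ∧ f i = v := by
    have hinj' : Function.Injective (fun i : Fin n => f i.val) := fun i j hij =>
      Fin.ext (hinj _ _ i.isLt j.isLt hij)
    have hsurj' : Function.Surjective (fun i : Fin n => f i.val) :=
      Finite.surjective_of_injective hinj'
    intro v
    obtain ⟨i, hi⟩ := hsurj' v
    exact ⟨i.val, i.isLt, hi⟩
  -- decompose e1 with sorted indices
  obtain ⟨a, ha, b, hb, hab, he1⟩ : ∃ a, a < n ∧ ∃ b, b < n ∧ a < b ∧ e1 = s(f a, f b) := by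
    obtain ⟨x, y, hxy⟩ : ∃ x y, e1 = s(x, y) := by
      induction e1 using Sym2.ind with | _ x y => exact ⟨x, y, rfl⟩
    have hadjxy : G.Adj x y := by rw [hxy] at h1; exact h1
    obtain ⟨i, hi, rfl⟩ := hsurj x
    obtain ⟨j, hj, rfl⟩ := hsurj y
    have hij : i ≠ j := fun h => (G.ne_of_adj hadjxy) (by rw [h])
    rcases Nat.lt_or_ge i j with h | h
    · exact ⟨i, hi, j, hj, h, hxy⟩
    · exact ⟨j, hj, i, hi, by omega, by rw [hxy, Sym2.eq_swap]⟩
  -- rotate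
  set g' : ℕ → Fin n := fun t => f (t + a) with hg'
  have hperg : ∀ t, g' (t + n) = g' t := by
    intro t; simp only [hg']
    rw [show t + n + a = (t+a) + n by ring, hper]
  have hadjg : ∀ t, G.Adj (g' t) (g' (t+1)) := by
    intro t; simp only [hg']
    rw [show t + 1 + a = (t+a) + 1 by ring]
    exact hadj (t+a)
  have hinjg : ∀ i j, i < n → j < n → g' i = g' j → i = j := by
    intro i j hi hj hij
    simp only [hg'] at hij
    have := f_inj_mod f hper hinj hij
    have h2' : i % n = j % n := Nat.ModEq.add_right_cancel' a this
    rwa [Nat.mod_eq_of_lt hi, Nat.mod_eq_of_lt hj] at h2'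
  have hCEshift : ∀ t, CE g' t = CE f (t + a) := by
    intro t
    unfold CE
    simp only [hg']
    rw [show t + 1 + a = (t+a) + 1 by ring]
  have hrange : Set.range (CE g') = Set.range (CE f) := by
    ext e
    constructor
    · rintro ⟨t, rfl⟩; exact ⟨t + a, (hCEshift t).symm⟩
    · rintro ⟨t, rfl⟩
      refine ⟨t + n - a, ?_⟩
      rw [hCEshift, show t + n - a + a = t + n by omega, CE_per f hper]
  -- e1 in rotated coordinates
  set B := b - a with hB
  have hg'0 : g' 0 = f a := by simp only [hg']; congr 1; omega
  have hg'B : g' B = f b := by simp only [hg']; congr 1; omega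
  have he1' : e1 = s(g' 0, g' B) := by rw [hg'0, hg'B, he1]
  have hB1 : 1 ≤ B := by omega
  have hBn : B ≤ n - 1 := by omega
  have hgn0 : g' n = g' 0 := by
    have := hperg 0
    rwa [Nat.zero_add] at this
  have hB2 : 2 ≤ B := by
    rcases Nat.lt_or_ge B 2 with h | h
    · exfalso
      have hBeq : B = 1 := by omega
      apply hc1
      rw [← hrange]
      exact ⟨0, by rw [CE, Nat.zero_add, ← hBeq, he1']⟩
    · exact h
  have hBn2 : B ≤ n - 2 := by
    rcases Nat.lt_or_ge B (n-1) with h | h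
    · omega
    · exfalso
      have hBeq : B = n - 1 := by omega
      apply hc1
      rw [← hrange]
      refine ⟨n - 1, ?_⟩
      rw [CE, show n - 1 + 1 = n by omega, hgn0, ← hBeq, he1', Sym2.eq_swap]
  -- e2 in rotated coordinates
  obtain ⟨c, d, hcd, hdn, he2'⟩ : ∃ c d, c < d ∧ d ≤ n - 1 ∧ e2 = s(g' c, g' d) := by
    obtain ⟨x, y, hxy⟩ : ∃ x y, e2 = s(x, y) := by
      induction e2 using Sym2.ind with | _ x y => exact ⟨x, y, rfl⟩
    have hadjxy : G.Adj x y := by rw [hxy] at h2; exact h2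
    obtain ⟨i, hi, rfl⟩ := hsurj x
    obtain ⟨j, hj, rfl⟩ := hsurj y
    have hgi : g' ((i + (n - a)) % n) = f i := by
      rw [← f_mod g' hperg (i + (n-a))]
      show f (i + (n - a) + a) = f i
      rw [show i + (n - a) + a = i + n by omega, hper]
    have hgj : g' ((j + (n - a)) % n) = f j := by
      rw [← f_mod g' hperg (j + (n-a))]
      show f (j + (n - a) + a) = f j
      rw [show j + (n - a) + a = j + n by omega, hper]
    set ci := (i + (n - a)) % n with hci
    set dj := (j + (n - a)) % n with hdj
    have hciltn : ci < n := Nat.mod_lt _ hn0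
    have hdjltn : dj < n := Nat.mod_lt _ hn0
    have hcine : ci ≠ dj := by
      intro h
      have : f i = f j := by rw [← hgi, ← hgj, h]
      have := hinj _ _ hi hj this
      exact (G.ne_of_adj hadjxy) (by rw [this])
    rcases Nat.lt_or_ge ci dj with h | h
    · exact ⟨ci, dj, h, by omega, by rw [hxy, ← hgi, ← hgj]⟩
    · exact ⟨dj, ci, by omega, by omega, by rw [hxy, ← hgi, ← hgj, Sym2.eq_swap]⟩
  have hdc1 : d ≠ c + 1 := by
    intro h
    apply hc2
    rw [← hrange]
    exact ⟨c, by rw [CE, he2', h]⟩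
  have hc0dn : ¬(c = 0 ∧ d = n - 1) := by
    rintro ⟨rfl, rfl⟩
    apply hc2
    rw [← hrange]
    refine ⟨n - 1, ?_⟩
    rw [CE, show n - 1 + 1 = n by omega, hgn0, he2', Sym2.eq_swap]
  -- adjacency of the chords in rotated coordinates
  have g0B : G.Adj (g' 0) (g' B) := by rw [← SimpleGraph.mem_edgeSet, ← he1']; exact h1
  have gcd : G.Adj (g' c) (g' d) := by rw [← SimpleGraph.mem_edgeSet, ← he2']; exact h2
  have hc1' : s(g' 0, g' B) ∉ Set.range (CE g') := by rw [hrange, ← he1']; exact hc1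
  have hc2' : s(g' c, g' d) ∉ Set.range (CE g') := by rw [hrange, ← he2']; exact hc2
  rw [he1', he2', ← hrange]
  have hne' : s(g' 0, g' B) ≠ s(g' c, g' d) := fun h => hne (he1'.trans (h.trans he2'.symm))
  -- case analysis
  rcases Nat.eq_zero_or_pos c with rfl | hcpos
  · -- shared vertex g' 0
    have hdB : d ≠ B := fun h => hne' (by rw [h])
    have hd2 : 2 ≤ d := by omega
    have hdn2 : d ≤ n - 2 := by omega
    rcases Nat.lt_or_ge d B with h | h
    · exact (good_shared0 g' hperg hadjg hinjg (by omega) h hBn gcd g0B hc2'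
        (fun h' => hne' h'.symm)).symm
    · exact good_shared0 g' hperg hadjg hinjg (by omega) (by omega) hdn g0B gcd hc1' hne'
  · rcases Nat.lt_trichotomy c B with hcB | rfl | hcB
    · rcases Nat.lt_trichotomy d B with hdB | rfl | hdB
      · exact good_nested g' hperg hadjg hinjg hcpos hcd hdB hBn g0B gcd hc1' hne'
      · exact good_sharedTop g' hperg hadjg hinjg hcpos hcB hBn g0B gcd hc2' hne'
      · exact good_crossing g' hperg hadjg hinjg hcpos hcB hdB hdn g0B gcd hc1' hne'
    · exact good_sharedMid g' hperg hadjg hinjg (by omega) hcd (by omega) hdn g0B gcd hc1' hne'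
    · exact good_parallel g' hperg hadjg hinjg hB2 hcB hcd hdn g0B gcd hc1' hne'


include hper hadj hinj in
lemma chords_card (hn3 : 3 ≤ n)
    (hNR : ∀ (u v : Fin n) (p : G.Walk u u) (q : G.Walk v v),
      p.IsCycle → q.IsCycle → p.length = q.length →
        {e | e ∈ p.edges} = {e | e ∈ q.edges}) :
    ∃ k : ℕ, G.edgeSet.ncard = n + k ∧ k * (k - 1) ≤ 2 * (n - 2) := by
  classical
  have hn0 : 0 < n := by omega
  have hfin : G.edgeSet.Finite := Set.toFinite _
  set E := hfin.toFinset with hE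
  set Hfin := (Finset.range n).image (CE f) with hHfin
  have hHsub : Hfin ⊆ E := by
    intro e he
    rw [hHfin, Finset.mem_image] at he
    obtain ⟨t, _, rfl⟩ := he
    rw [hE, Set.Finite.mem_toFinset]
    exact hadj t
  have hHcard : Hfin.card = n := by
    rw [hHfin, Finset.card_image_of_injOn, Finset.card_range]
    intro x hx y hy hxy
    rw [Finset.mem_coe, Finset.mem_range] at hx hy
    have := CE_inj f hper hinj hn3 hxy
    rwa [Nat.mod_eq_of_lt hx, Nat.mod_eq_of_lt hy] at this
  have hrangeH : ∀ e, e ∈ Set.range (CE f) ↔ e ∈ Hfin := by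
    intro e
    constructor
    · rintro ⟨t, rfl⟩
      rw [hHfin, Finset.mem_image]
      exact ⟨t % n, Finset.mem_range.mpr (Nat.mod_lt _ hn0), (CE_mod f hper (by omega) t).symm⟩
    · intro h
      rw [hHfin, Finset.mem_image] at h
      obtain ⟨t, _, rfl⟩ := h
      exact ⟨t, rfl⟩
  set D := E \ Hfin with hD
  refine ⟨D.card, ?_, ?_⟩
  · rw [Set.ncard_eq_toFinset_card _ hfin]
    have hsd := Finset.card_sdiff_add_card_eq_card hHsub
    rw [← hD] at hsd
    show E.card = n + D.card
    omega
  · -- the pair-counting argument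
    set P2 := D.powersetCard 2 with hP2
    have key : ∀ S, S ∈ P2 → ∃ (u : Fin n) (w : G.Walk u u), w.IsCycle ∧ w.length ≤ n ∧
        {e | e ∈ w.edges ∧ e ∉ Set.range (CE f)} = ↑S := by
      intro S hS
      rw [hP2, Finset.mem_powersetCard] at hS
      obtain ⟨hSD, hS2⟩ := hS
      obtain ⟨e1, e2, hne, rfl⟩ := Finset.card_eq_two.mp hS2
      have he1D : e1 ∈ D := hSD (by simp)
      have he2D : e2 ∈ D := hSD (by simp)
      have hmem : ∀ e ∈ D, e ∈ G.edgeSet ∧ e ∉ Set.range (CE f) := by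
        intro e he
        rw [hD, Finset.mem_sdiff] at he
        refine ⟨by rw [hE, Set.Finite.mem_toFinset] at he; exact he.1, fun hr => he.2 ?_⟩
        exact (hrangeH e).mp hr
      obtain ⟨he1G, he1r⟩ := hmem e1 he1D
      obtain ⟨he2G, he2r⟩ := hmem e2 he2D
      obtain ⟨u, w, hcyc, hlen, hcov, hm1, hm2⟩ :=
        good_of_chords f hper hadj hinj hn3 he1G he2G he1r he2r hne
      refine ⟨u, w, hcyc, hlen, ?_⟩
      ext e
      simp only [Set.mem_setOf_eq, Finset.coe_insert, Finset.coe_singleton,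
        Set.mem_insert_iff, Set.mem_singleton_iff]
      constructor
      · rintro ⟨hew, her⟩
        rcases hcov e hew with h | h | h
        · exact absurd h her
        · exact Or.inl h
        · exact Or.inr h
      · rintro (rfl | rfl)
        · exact ⟨hm1, he1r⟩
        · exact ⟨hm2, he2r⟩
    choose uS wS hcycS hlenS hsetS using key
    have hinjF : ∀ S ∈ P2, ∀ T ∈ P2,
        (fun S => if h : S ∈ P2 then (wS S h).length else 0) S =
        (fun S => if h : S ∈ P2 then (wS S h).length else 0) T → S = T := by
      intro S hS T hT hFST
      simp only [dif_pos hS, dif_pos hT] at hFST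
      have := hNR _ _ (wS S hS) (wS T hT) (hcycS S hS) (hcycS T hT) hFST
      apply Finset.coe_injective
      rw [← hsetS S hS, ← hsetS T hT]
      have hmm : ∀ e, e ∈ (wS S hS).edges ↔ e ∈ (wS T hT).edges := by
        intro e
        rw [Set.ext_iff] at this
        simpa using this e
      ext e
      simp only [Set.mem_setOf_eq]
      exact and_congr_left' (hmm e)
    have hcardle : P2.card ≤ (Finset.Icc 3 n).card := by
      apply Finset.card_le_card_of_injOn (fun S => if h : S ∈ P2 then (wS S h).length else 0)
      · intro S hS
        simp only [Finset.mem_coe, dif_pos (show S ∈ P2 from hS), Finset.mem_Icc]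
        exact ⟨(hcycS S hS).three_le_length, hlenS S hS⟩
      · exact fun S hS T hT h => hinjF S hS T hT h
    rw [hP2, Finset.card_powersetCard] at hcardle
    rw [Nat.card_Icc] at hcardle
    have hchoose : D.card.choose 2 = D.card * (D.card - 1) / 2 := Nat.choose_two_right _
    have heven : D.card * (D.card - 1) % 2 = 0 := by
      apply Nat.even_iff.mp
      rcases Nat.eq_zero_or_pos D.card with h | h
      · simp [h]
      · have hev := Nat.even_mul_succ_self (D.card - 1)
        rw [Nat.sub_add_cancel h] at hev
        rwa [Nat.mul_comm] at hev
    omega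


end good

section extract

variable {n : ℕ} {G : SimpleGraph (Fin n)}

set_option maxHeartbeats 1000000 in
lemma exists_f (hn3 : 3 ≤ n) (u : Fin n) (p : G.Walk u u) (hcyc : p.IsCycle)
    (hlen : p.length = n) :
    ∃ f : ℕ → Fin n, (∀ t, f (t + n) = f t) ∧ (∀ t, G.Adj (f t) (f (t+1))) ∧
      (∀ i j, i < n → j < n → f i = f j → i = j) := by
  classical
  have hn0 : 0 < n := by omega
  have hsuplen : p.support.length = n + 1 := by
    rw [SimpleGraph.Walk.length_support, hlen]
  have hT : p.support.tail.length = n := by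
    rw [List.length_tail, hsuplen]
    omega
  set T := p.support.tail with hTdef
  refine ⟨fun t => T[t % n]'(by rw [hT]; exact Nat.mod_lt _ hn0), ?_, ?_, ?_⟩
  · intro t
    simp
  · intro t
    have hsupcons : p.support = u :: T := p.support_eq_cons
    have hchain := p.isChain_adj_support
    rw [List.isChain_iff_getElem] at hchain
    have hchain' : ∀ (i : ℕ) (h : i + 1 < n + 1),
        G.Adj (p.support[i]'(by omega)) (p.support[i+1]'(by omega)) := by
      intro i h
      have := hchain i (by rw [hsuplen]; omega)
      simpa using this
    have hTS : ∀ (i : ℕ) (h : i < n), T[i]'(by omega) = p.support[i+1]'(by omega) := by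
      intro i h
      simp [hTdef]
    have hlast : T[n-1]'(by omega) = u := by
      have h1 := p.getLast_support
      rw [List.getLast_eq_getElem] at h1
      rw [hTS (n-1) (by omega)]
      convert h1 using 2
      omega
    set i := t % n with hidef
    have hilt : i < n := Nat.mod_lt _ hn0
    rcases Nat.lt_or_ge (i + 1) n with hcase | hcase
    · have h2 : (t+1) % n = i + 1 := by
        rw [Nat.add_mod t 1 n, Nat.mod_eq_of_lt (show 1 < n by omega), ← hidef,
          Nat.mod_eq_of_lt hcase]
      simp only [h2]
      rw [hTS i hilt, hTS (i+1) hcase]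
      exact hchain' (i+1) (by omega)
    · have hieq : i = n - 1 := by omega
      have h2 : (t+1) % n = 0 := by
        rw [Nat.add_mod t 1 n, Nat.mod_eq_of_lt (show 1 < n by omega), ← hidef,
          show i + 1 = n by omega, Nat.mod_self]
      simp only [h2]
      have hadj0 : G.Adj u (T[0]'(by omega)) := by
        have h0 := hchain' 0 (by omega)
        have e0 : p.support[0]'(by omega) = u := by
          simp [hsupcons]
        have e1 : p.support[0+1]'(by omega) = T[0]'(by omega) := (hTS 0 (by omega)).symm
        rwa [e0, e1] at h0
      have hTi : T[i]'(by omega) = u := by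
        simp only [hieq]
        exact hlast
      rw [hTi]
      exact hadj0
  · intro i j hi hj hij
    have hnd : T.Nodup := hcyc.support_nodup
    simp only [Nat.mod_eq_of_lt hi, Nat.mod_eq_of_lt hj] at hij
    exact (hnd.getElem_inj_iff).mp hij

end extract


end ShiAux

/-- The cycle `C_n` on vertex set `Fin n`, where label `i` represents the integer `i + 1`;
edges join consecutive integers mod `n` (i.e. `{i, i+1}` for `1 ≤ i ≤ n - 1` and `{n, 1}`). -/
def cycG (n : ℕ) : SimpleGraph (Fin n) :=
  SimpleGraph.fromRel (fun i j => (i.val + 1) % n = j.val)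

/-- The graph `G_n(S)`: the cycle `C_n` together with a chord `{1, a}` for each `a ∈ S`
(vertex label `i` represents the integer `i + 1`, so the integer vertex `1` is label `0`
and the integer vertex `a` is label `a - 1`). -/
def GnS (n : ℕ) (S : Finset ℕ) : SimpleGraph (Fin n) :=
  SimpleGraph.fromRel (fun i j => (i.val + 1) % n = j.val ∨ (i.val = 0 ∧ j.val + 1 ∈ S))

/-- A graph on a finite vertex type is Hamiltonian if it has a cycle through all vertices,
i.e. a cycle whose length equals the number of vertices. -/
def IsHamiltonianGraph {V : Type*} [Fintype V] (G : SimpleGraph V) : Prop :=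
  ∃ (u : V) (p : G.Walk u u), p.IsCycle ∧ p.length = Fintype.card V

/-- No two cycles of `G` have the same length: any two cycles with equal length are the same
cycle, i.e. have the same edge set. -/
def NoRepeatedCycleLength {V : Type*} (G : SimpleGraph V) : Prop :=
  ∀ (u v : V) (p : G.Walk u u) (q : G.Walk v v),
    p.IsCycle → q.IsCycle → p.length = q.length →
      {e | e ∈ p.edges} = {e | e ∈ q.edges}

/-- `g n` is the maximum number of edges in an `n`-vertex Hamiltonian graph in which
no two cycles have the same length. -/
noncomputable def g (n : ℕ) : ℕ :=
  sSup {m | ∃ G : SimpleGraph (Fin n),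
    G.edgeSet.ncard = m ∧ IsHamiltonianGraph G ∧ NoRepeatedCycleLength G}

lemma main_bound {n : ℕ} (hn3 : 3 ≤ n) (G : SimpleGraph (Fin n))
    (hham : IsHamiltonianGraph G) (hNR : NoRepeatedCycleLength G) :
    ∃ k : ℕ, G.edgeSet.ncard = n + k ∧ k * (k - 1) ≤ 2 * (n - 2) := by
  obtain ⟨u, p, hcyc, hlen⟩ := hham
  rw [Fintype.card_fin] at hlen
  obtain ⟨f, hper, hadj, hinj⟩ := ShiAux.exists_f hn3 u p hcyc hlen
  exact ShiAux.chords_card f hper hadj hinj hn3 hNR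

/-- For all `n ≥ 3`, `g(n) < n + √(2n) + 1`. -/
theorem stmt12 (n : ℕ) (hn : 3 ≤ n) :
    (g n : ℝ) < (n : ℝ) + Real.sqrt (2 * n) + 1 := by
  have hsq : (0:ℝ) ≤ Real.sqrt (2 * n) := Real.sqrt_nonneg _
  have hpos : (0:ℝ) < (n : ℝ) + Real.sqrt (2 * n) + 1 := by positivity
  set S : Set ℕ := {m | ∃ G : SimpleGraph (Fin n),
    G.edgeSet.ncard = m ∧ IsHamiltonianGraph G ∧ NoRepeatedCycleLength G} with hS
  have hg : g n = sSup S := rfl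
  rw [hg]
  by_cases hbdd : BddAbove S
  · by_cases hnon : S.Nonempty
    · obtain ⟨G, hGcard, hham, hNR⟩ := Nat.sSup_mem hnon hbdd
      obtain ⟨k, hcard, hk⟩ := main_bound hn G hham hNR
      rw [← hGcard, hcard]
      push_cast
      have hksqrt : (k : ℝ) < Real.sqrt (2 * n) + 1 := by
        rcases Nat.eq_zero_or_pos k with rfl | hkpos
        · norm_num
          positivity
        · have h1 : (k - 1) * (k - 1) < 2 * n := by
            have h2 : (k - 1) * (k - 1) ≤ k * (k - 1) := by
              apply Nat.mul_le_mul_right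
              omega
            omega
          have h1' : ((k : ℝ) - 1) ^ 2 < 2 * n := by
            have := (Nat.cast_lt (α := ℝ)).mpr h1
            push_cast [Nat.cast_sub hkpos] at this
            nlinarith [this]
          have := (Real.lt_sqrt (by
            have : (1:ℝ) ≤ k := by exact_mod_cast hkpos
            linarith)).mpr h1'
          linarith
      linarith
    · rw [Set.not_nonempty_iff_eq_empty] at hnon
      rw [hnon, csSup_empty]
      simpa using hpos
  · rw [csSup_of_not_bddAbove hbdd, csSup_empty]
    simpa using hpos
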